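/- For every integer n ≥ 12 and every complex number z with z^{2n} − z^{2n−1} + z^{n} − z + 1 = 0, we have 1 − (log n)²/n ≤ |z| ≤ 1 + (log n)²/n. -/

import Mathlib

theorem key19 (n : ℕ) (hn : 12 ≤ n) (z : ℂ)
    (hz : z^(2*n) - z^(2*n-1) + z^n - z + 1 = 0) :
    ‖z‖ ≤ 1 + (Real.log n)^2 / n := by
  obtain ⟨L, hLdef⟩ : ∃ L : ℝ, Real.log n = L := ⟨_, rfl⟩
  obtain ⟨ε, hεdef⟩ : ∃ e : ℝ, L^2 / n = e := ⟨_, rfl⟩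
  rw [hLdef, hεdef]
  have hn' : (12:ℝ) ≤ n := by exact_mod_cast hn
  have hnpos : (0:ℝ) < n := by linarith
  -- L ≥ 9/4
  have hL : (9/4 : ℝ) ≤ L := by
    rw [← hLdef, Real.le_log_iff_exp_le hnpos]
    calc Real.exp (9/4) ≤ 12 := by
          have h9 : Real.exp 9 < 20736 := by
            have h : Real.exp 9 = Real.exp 1 ^ (9:ℕ) := by rw [← Real.exp_nat_mul]; norm_num
            rw [h]
            calc Real.exp 1 ^ (9:ℕ) < 2.7182818286 ^ (9:ℕ) :=
                  pow_lt_pow_left₀ Real.exp_one_lt_d9 (Real.exp_pos 1).le (by norm_num)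
              _ < 20736 := by norm_num
          have h4 : Real.exp (9/4) ^ (4:ℕ) = Real.exp 9 := by rw [← Real.exp_nat_mul]; norm_num
          refine le_of_lt (lt_of_pow_lt_pow_left₀ 4 (by norm_num) ?_)
          rw [h4]; linarith
      _ ≤ n := hn'
  have hexpL : Real.exp L = n := by rw [← hLdef]; exact Real.exp_log hnpos
  -- ε ∈ (0,1]
  have hL0 : (0:ℝ) < L := by linarith
  have hε0 : 0 < ε := by
    rw [← hεdef]; positivity
  have hε1 : ε ≤ 1 := by
    have hsq : L^2 ≤ n := by
      rw [← hexpL]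
      have hx := Real.add_one_le_exp (L/4)
      have h4 : Real.exp (L/4) ^ (4:ℕ) = Real.exp L := by rw [← Real.exp_nat_mul]; ring_nf
      have h2 : L ≤ Real.exp (L/4)^2 := by nlinarith [sq_nonneg (1 - L/4)]
      nlinarith [sq_nonneg (Real.exp (L/4)^2), hL]
    rw [← hεdef, div_le_one hnpos]; exact hsq
  by_contra hcon
  push_neg at hcon
  obtain ⟨r, hrdef⟩ : ∃ r : ℝ, ‖z‖ = r := ⟨_, rfl⟩
  rw [hrdef] at hcon
  have hr1 : 1 < r := by linarith
  have hr0 : 0 < r := by linarith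
  -- triangle inequality bound
  have heq : z^(2*n) = z^(2*n-1) - z^n + z - 1 := by linear_combination hz
  have htri : r^(2*n) ≤ r^(2*n-1) + r^n + r + 1 := by
    have t : ∀ a b : ℂ, ‖a - b‖ ≤ ‖a‖ + ‖b‖ := fun a b => by
      simpa [sub_eq_add_neg] using norm_add_le a (-b)
    calc r^(2*n) = ‖z^(2*n)‖ := by rw [norm_pow, hrdef]
      _ = ‖z^(2*n-1) - z^n + z - 1‖ := by rw [heq]
      _ ≤ ‖z^(2*n-1) - z^n + z‖ + ‖(1:ℂ)‖ := t _ _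
      _ ≤ (‖z^(2*n-1) - z^n‖ + ‖z‖) + ‖(1:ℂ)‖ :=
          by gcongr; exact norm_add_le _ _
      _ ≤ ((‖z^(2*n-1)‖ + ‖z^n‖) + ‖z‖) + ‖(1:ℂ)‖ :=
          by gcongr; exact t _ _
      _ = r^(2*n-1) + r^n + r + 1 := by rw [norm_pow, norm_pow, norm_one, hrdef]
  -- reduce to: r^(n-1) * (r - 1) <= 3
  have hrn : 1 ≤ r^n := one_le_pow₀ hr1.le
  have hrr : r ≤ r^n := le_self_pow₀ hr1.le (by omega)
  have h2 : r^(2*n) = r^n * r^n := by rw [← pow_add]; congr 1; omega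
  have h3 : r^(2*n-1) = r^n * r^(n-1) := by rw [← pow_add]; congr 1; omega
  have hp : (0:ℝ) < r^n := by positivity
  have hdiv : r^n ≤ r^(n-1) + 3 := by
    have hm : r^n * r^n ≤ r^n * (r^(n-1) + 3) := by nlinarith [htri]
    exact (mul_le_mul_iff_right₀ hp).mp hm
  have hsplit : r^n = r^(n-1) * r := by rw [← pow_succ]; congr 1; omega
  have hfle : r^(n-1) * (r-1) ≤ 3 := by nlinarith [hdiv]
  -- lower bound on r^(n-1) * (r-1)
  have hexp_eps : Real.exp (ε/2) ≤ 1 + ε := by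
    have hpos : (0:ℝ) < 1 + ε := by linarith
    rw [← Real.exp_log hpos, Real.exp_le_exp]
    have h := Real.log_le_sub_one_of_pos (show (0:ℝ) < (1+ε)⁻¹ by positivity)
    rw [Real.log_inv] at h
    have hinv : (1+ε)⁻¹ ≤ 1 - ε/2 := by
      rw [inv_le_iff_one_le_mul₀ hpos] at *
      nlinarith
    linarith
  have hpowexp : Real.exp ((n-1 : ℕ) * (ε/2)) ≤ (1+ε)^(n-1) := by
    rw [Real.exp_nat_mul]
    exact pow_le_pow_left₀ (Real.exp_pos _).le hexp_eps _
  have hcast : ((n-1 : ℕ) : ℝ) = (n:ℝ) - 1 := by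
    rw [Nat.cast_sub (by omega)]; norm_num
  have harg : (11/24) * L^2 ≤ ((n-1:ℕ):ℝ) * (ε/2) := by
    rw [hcast]
    have hεn : ε * n = L^2 := by
      rw [← hεdef]; field_simp
    have ht : 0 ≤ ((n:ℝ) - 12) * ε := mul_nonneg (by linarith) hε0.le
    linarith only [hεn, ht]
  have hchain : 3 < ε * Real.exp ((11/24)*L^2) := by
    have heq3 : ε * Real.exp ((11/24)*L^2) = L^2 * Real.exp ((11/24)*L^2 - L) := by
      rw [Real.exp_sub, hexpL, ← hεdef]; ring
    rw [heq3]
    have hq : (0:ℝ) ≤ (L - 9/4) * L := mul_nonneg (by linarith) hL0.le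
    have h1 : (1:ℝ) ≤ Real.exp ((11/24)*L^2 - L) := Real.one_le_exp (by linarith only [hq, hL])
    have hq2 : (0:ℝ) ≤ (L - 9/4) * (L + 9/4) := mul_nonneg (by linarith) (by linarith)
    have hfin2 : L^2 * 1 ≤ L^2 * Real.exp ((11/24)*L^2 - L) :=
      mul_le_mul_of_nonneg_left h1 (sq_nonneg L)
    linarith only [hq2, hfin2]
  have hmono : Real.exp ((11/24)*L^2) ≤ Real.exp ((n-1:ℕ) * (ε/2)) := Real.exp_le_exp.mpr harg
  have hrpow : (1+ε)^(n-1) ≤ r^(n-1) := pow_le_pow_left₀ (by linarith) hcon.le _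
  have hfinal : 3 < r^(n-1) * (r-1) := by
    calc (3:ℝ) < ε * Real.exp ((11/24)*L^2) := hchain
      _ ≤ ε * (1+ε)^(n-1) := by
          refine mul_le_mul_of_nonneg_left (le_trans hmono hpowexp) hε0.le
      _ ≤ r^(n-1) * (r-1) := by
          rw [mul_comm ε _]
          exact mul_le_mul hrpow (by linarith) (by linarith) (by positivity)
  linarith

theorem stmt_19 (n : ℕ) (hn : 12 ≤ n) (z : ℂ)
    (hz : z^(2*n) - z^(2*n-1) + z^n - z + 1 = 0) :
    1 - (Real.log n)^2 / n ≤ ‖z‖ ∧ ‖z‖ ≤ 1 + (Real.log n)^2 / n := by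
  have hz0 : z ≠ 0 := by
    intro h
    rw [h, zero_pow (by omega : 2*n ≠ 0), zero_pow (by omega : 2*n-1 ≠ 0),
      zero_pow (by omega : n ≠ 0)] at hz
    simp at hz
  refine ⟨?_, key19 n hn z hz⟩
  -- reciprocal root
  have hzu : z * z⁻¹ = 1 := mul_inv_cancel₀ hz0
  have e1 : z^(2*n) * (z⁻¹)^(2*n) = 1 := by rw [← mul_pow, hzu, one_pow]
  have es : z^(2*n) = z^(2*n-1) * z := by rw [← pow_succ]; congr 1; omega
  have en : z^(2*n) = z^n * z^n := by rw [← pow_add]; congr 1; omega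
  have e2 : z^(2*n) * (z⁻¹)^(2*n-1) = z := by
    rw [es, mul_right_comm, ← mul_pow, hzu, one_pow, one_mul]
  have e3 : z^(2*n) * (z⁻¹)^n = z^n := by
    rw [en, mul_assoc, ← mul_pow, hzu, one_pow, mul_one]
  have e4 : z^(2*n) * z⁻¹ = z^(2*n-1) := by
    rw [es, mul_assoc, hzu, mul_one]
  have hmul : z^(2*n) * ((z⁻¹)^(2*n) - (z⁻¹)^(2*n-1) + (z⁻¹)^n - z⁻¹ + 1) = 0 := by
    linear_combination e1 - e2 + e3 - e4 + hz
  have hw : (z⁻¹)^(2*n) - (z⁻¹)^(2*n-1) + (z⁻¹)^n - z⁻¹ + 1 = 0 :=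
    (mul_eq_zero.mp hmul).resolve_left (pow_ne_zero _ hz0)
  have hup := key19 n hn z⁻¹ hw
  rw [norm_inv] at hup
  have habs : 0 < ‖z‖ := norm_pos_iff.mpr hz0
  have hε : (0:ℝ) ≤ (Real.log n)^2 / n := by positivity
  have hup' : 1 ≤ (1 + (Real.log n)^2 / n) * ‖z‖ :=
    (inv_le_iff_one_le_mul₀ habs).mp hup
  nlinarith [hup', hε, habs]
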